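/- Let C ≥ 2 and let V₁, V₂, … be an i.i.d. sequence of random vectors on a probability space, each almost surely a probability vector on Fin C with a unique maximal entry, with integrable coordinates, and with exchangeable distribution (invariant in law under every permutation of Fin C). Fix thresholds 0 ≤ β₁ < β₂ ≤ 1 and let V̂_k denote the error-corrected vector of V_k. Then almost surely, for every class i : Fin C, the ensemble average (1/K)·∑_{k=1}^{K} V̂_k i converges to 1/C as K → ∞, and likewise (1/K)·∑_{k=1}^{K} V_k i converges to 1/C; that is, for unknown or random input signals both the simple ensemble average algorithm and the ensemble average with error correction produce the uniform distribution in the limit of infinitely many dropout instances. -/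

import Mathlib

open Finset MeasureTheory ProbabilityTheory Filter

/-- A probability vector on `Fin C`: nonnegative entries summing to 1. -/
def IsProbVec {C : ℕ} (v : Fin C → ℝ) : Prop :=
  (∀ i, 0 ≤ v i) ∧ ∑ i, v i = 1

/-- The error-corrected vector: one-hot at `m` if `v m ≥ β₂`, uniform if `v m < β₁`,
and `v` otherwise. -/
noncomputable def errCorrect {C : ℕ} (β₁ β₂ : ℝ) (v : Fin C → ℝ) (m : Fin C) :
    Fin C → ℝ :=
  if β₂ ≤ v m then (fun i => if i = m then 1 else 0)
  else if v m < β₁ then (fun _ => 1 / C)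
  else v

section aux
variable {C : ℕ} [NeZero C]

noncomputable def mxv (v : Fin C → ℝ) : ℝ := Finset.univ.sup' Finset.univ_nonempty v

noncomputable def fHat (β₁ β₂ : ℝ) (v : Fin C → ℝ) (i : Fin C) : ℝ :=
  if β₂ ≤ mxv v then (if v i = mxv v then 1 else 0)
  else if mxv v < β₁ then 1 / C
  else v i

lemma measurable_mxv : Measurable (mxv (C := C)) := by
  have h := Finset.measurable_sup' (Finset.univ_nonempty (α := Fin C))
    (f := fun j (v : Fin C → ℝ) => v j) (fun n _ => measurable_pi_apply n)
  have he : Finset.univ.sup' Finset.univ_nonempty (fun j (v : Fin C → ℝ) => v j) = mxv := by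
    funext v; rw [Finset.sup'_apply]; rfl
  rwa [he] at h

lemma measurable_fHat (β₁ β₂ : ℝ) (i : Fin C) :
    Measurable fun v : Fin C → ℝ => fHat β₁ β₂ v i := by
  unfold fHat
  refine Measurable.ite (measurableSet_le measurable_const measurable_mxv) ?_ ?_
  · exact Measurable.ite (measurableSet_eq_fun (measurable_pi_apply i) measurable_mxv)
      measurable_const measurable_const
  · exact Measurable.ite (measurableSet_lt measurable_mxv measurable_const)
      measurable_const (measurable_pi_apply i)

lemma mxv_comp (v : Fin C → ℝ) (σ : Equiv.Perm (Fin C)) : mxv (v ∘ σ) = mxv v := by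
  unfold mxv
  apply le_antisymm
  · exact Finset.sup'_le _ _ fun j _ => Finset.le_sup' v (Finset.mem_univ (σ j))
  · refine Finset.sup'_le _ _ fun j _ => ?_
    have := Finset.le_sup' (v ∘ σ) (Finset.mem_univ (σ.symm j))
    rw [Function.comp_apply, Equiv.apply_symm_apply] at this
    exact this

lemma fHat_comp (β₁ β₂ : ℝ) (v : Fin C → ℝ) (σ : Equiv.Perm (Fin C)) (i : Fin C) :
    fHat β₁ β₂ (v ∘ σ) i = fHat β₁ β₂ v (σ i) := by
  simp only [fHat, mxv_comp, Function.comp_apply]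

lemma mxv_eq {v : Fin C → ℝ} {m : Fin C} (hm : ∀ i, i ≠ m → v i < v m) :
    mxv v = v m := by
  apply le_antisymm
  · refine Finset.sup'_le _ _ fun j _ => ?_
    rcases eq_or_ne j m with rfl | h
    · exact le_rfl
    · exact (hm j h).le
  · exact Finset.le_sup' v (Finset.mem_univ m)

lemma eq_mxv_iff {v : Fin C → ℝ} {m : Fin C} (hm : ∀ i, i ≠ m → v i < v m) (j : Fin C) :
    v j = mxv v ↔ j = m := by
  rw [mxv_eq hm]
  constructor
  · intro h
    by_contra hne
    exact absurd h (ne_of_lt (hm j hne))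
  · rintro rfl; rfl

lemma fHat_eq_errCorrect (β₁ β₂ : ℝ) {v : Fin C → ℝ} {m : Fin C}
    (hm : ∀ i, i ≠ m → v i < v m) (i : Fin C) :
    fHat β₁ β₂ v i = errCorrect β₁ β₂ v m i := by
  have hvm := mxv_eq hm
  have hiff : ∀ j, v j = v m ↔ j = m := fun j => by rw [← mxv_eq hm]; exact eq_mxv_iff hm j
  by_cases h1 : β₂ ≤ v m
  · simp [fHat, errCorrect, hvm, h1, hiff]
  · by_cases h2 : v m < β₁ <;> simp [fHat, errCorrect, hvm, h1, h2]

lemma sum_fHat (β₁ β₂ : ℝ) {v : Fin C → ℝ} {m : Fin C}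
    (hv : IsProbVec v) (hm : ∀ i, i ≠ m → v i < v m) :
    ∑ i, fHat β₁ β₂ v i = 1 := by
  have hCne : (C : ℝ) ≠ 0 := Nat.cast_ne_zero.2 (NeZero.ne C)
  by_cases h1 : β₂ ≤ mxv v
  · simp only [fHat, h1, if_true, eq_mxv_iff hm]
    simp
  · by_cases h2 : mxv v < β₁
    · simp only [fHat, h1, if_false, h2, if_true]
      rw [Finset.sum_const, Finset.card_univ, Fintype.card_fin, nsmul_eq_mul, mul_one_div,
        div_self hCne]
    · simp only [fHat, h1, if_false, h2]
      exact hv.2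

lemma abs_fHat_le (β₁ β₂ : ℝ) {v : Fin C → ℝ} (hv : IsProbVec v) (i : Fin C) :
    |fHat β₁ β₂ v i| ≤ 1 := by
  have h0 : 0 ≤ v i := hv.1 i
  have h1 : v i ≤ 1 := by
    rw [← hv.2]; exact Finset.single_le_sum (fun j _ => hv.1 j) (Finset.mem_univ i)
  have hC1 : (1 : ℝ) ≤ C := by
    exact_mod_cast Nat.one_le_iff_ne_zero.2 (NeZero.ne C)
  unfold fHat
  split_ifs
  · norm_num
  · norm_num
  · rw [abs_of_nonneg (by positivity), div_le_one (by linarith)]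
    exact hC1
  · rw [abs_of_nonneg h0]; exact h1

end aux

theorem iid_exchangeable_ensemble_uniform {C : ℕ} (hC : 2 ≤ C)
    {Ω : Type*} [MeasurableSpace Ω] (μ : Measure Ω) [IsProbabilityMeasure μ]
    (V : ℕ → Ω → Fin C → ℝ) (hVmeas : ∀ k, Measurable (V k))
    (M : ℕ → Ω → Fin C) (hMmeas : ∀ k, Measurable (M k))
    (hprob : ∀ k, ∀ᵐ ω ∂μ, IsProbVec (V k ω) ∧
      ∀ i, i ≠ M k ω → V k ω i < V k ω (M k ω))
    (hint : ∀ k i, Integrable (fun ω => V k ω i) μ)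
    (hindep : iIndepFun V μ)
    (hident : ∀ k, Measure.map (V k) μ = Measure.map (V 0) μ)
    (hexch : ∀ k (σ : Equiv.Perm (Fin C)),
      Measure.map (fun ω => V k ω ∘ σ) μ = Measure.map (V k) μ)
    (β₁ β₂ : ℝ) (hβ₁ : 0 ≤ β₁) (hβ₁₂ : β₁ < β₂) (hβ₂ : β₂ ≤ 1) :
    ∀ᵐ ω ∂μ, ∀ i : Fin C,
      Tendsto (fun K : ℕ =>
          (1 / K : ℝ) * ∑ k ∈ Finset.range K, errCorrect β₁ β₂ (V k ω) (M k ω) i)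
        atTop (nhds (1 / C : ℝ)) ∧
      Tendsto (fun K : ℕ => (1 / K : ℝ) * ∑ k ∈ Finset.range K, V k ω i)
        atTop (nhds (1 / C : ℝ)) := by
  haveI : NeZero C := ⟨by omega⟩
  have hCne : (C : ℝ) ≠ 0 := Nat.cast_ne_zero.2 (NeZero.ne C)
  -- generic SLLN for equivariant functionals of the `V k`
  have slln : ∀ (g : Fin C → (Fin C → ℝ) → ℝ),
      (∀ j, Measurable (g j)) →
      (∀ j, Integrable (fun ω => g j (V 0 ω)) μ) →
      (∀ (σ : Equiv.Perm (Fin C)) (v : Fin C → ℝ) (j : Fin C), g j (v ∘ σ) = g (σ j) v) →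
      (∀ᵐ ω ∂μ, ∑ j, g j (V 0 ω) = 1) →
      ∀ i, ∀ᵐ ω ∂μ, Tendsto (fun K : ℕ =>
        (1 / K : ℝ) * ∑ k ∈ Finset.range K, g i (V k ω)) atTop (nhds (1 / C : ℝ)) := by
    intro g hgm hgint hgequiv hgsum i
    have hstep : ∀ j, ∫ ω, g j (V 0 ω) ∂μ = ∫ ω, g i (V 0 ω) ∂μ := by
      intro j
      have hσm : Measurable (fun ω => V 0 ω ∘ (Equiv.swap i j : Equiv.Perm (Fin C))) :=
        measurable_pi_iff.2 fun a => (measurable_pi_apply _).comp (hVmeas 0)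
      calc ∫ ω, g j (V 0 ω) ∂μ
          = ∫ ω, g i (V 0 ω ∘ (Equiv.swap i j : Equiv.Perm (Fin C))) ∂μ := by
            refine integral_congr_ae (Filter.Eventually.of_forall fun ω => ?_)
            show g j (V 0 ω) = g i (V 0 ω ∘ (Equiv.swap i j : Equiv.Perm (Fin C)))
            rw [hgequiv (Equiv.swap i j) (V 0 ω) i, Equiv.swap_apply_left]
        _ = ∫ v, g i v ∂(Measure.map (fun ω => V 0 ω ∘ (Equiv.swap i j : Equiv.Perm (Fin C))) μ) :=
            (integral_map hσm.aemeasurable (hgm i).aestronglyMeasurable).symm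
        _ = ∫ v, g i v ∂(Measure.map (V 0) μ) := by rw [hexch 0 (Equiv.swap i j)]
        _ = ∫ ω, g i (V 0 ω) ∂μ :=
            integral_map (hVmeas 0).aemeasurable (hgm i).aestronglyMeasurable
    have hsum1 : ∑ j, ∫ ω, g j (V 0 ω) ∂μ = 1 := by
      rw [← integral_finset_sum _ fun j _ => hgint j, integral_congr_ae hgsum]
      simp
    have h2 : ∑ _j : Fin C, ∫ ω, g i (V 0 ω) ∂μ = 1 :=
      (Finset.sum_congr rfl fun j _ => hstep j).symm.trans hsum1
    rw [Finset.sum_const, Finset.card_univ, Fintype.card_fin, nsmul_eq_mul] at h2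
    have hexp : ∫ ω, g i (V 0 ω) ∂μ = 1 / C := by
      rw [eq_div_iff hCne]; linarith
    have h := ProbabilityTheory.strong_law_ae (μ := μ) (fun k ω => g i (V k ω)) (hgint i)
      (fun k l hkl => (hindep.indepFun hkl).comp (hgm i) (hgm i))
      (fun k => (⟨(hVmeas k).aemeasurable, (hVmeas 0).aemeasurable, hident k⟩ :
        IdentDistrib (V k) (V 0) μ μ).comp (hgm i))
    rw [show μ[fun ω => g i (V 0 ω)] = (1 / C : ℝ) from hexp] at h
    refine h.mono fun ω hω => ?_
    simpa [one_div, smul_eq_mul] using hω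
  -- apply to the two functionals
  have hA : ∀ i, ∀ᵐ ω ∂μ, Tendsto (fun K : ℕ =>
      (1 / K : ℝ) * ∑ k ∈ Finset.range K, fHat β₁ β₂ (V k ω) i) atTop (nhds (1 / C : ℝ)) := by
    refine slln (fun j v => fHat β₁ β₂ v j) (fun j => measurable_fHat β₁ β₂ j) ?_
      (fun σ v j => fHat_comp β₁ β₂ v σ j) ?_
    · intro j
      refine Integrable.mono' (integrable_const (1 : ℝ))
        ((measurable_fHat β₁ β₂ j).comp (hVmeas 0)).aestronglyMeasurable ?_
      filter_upwards [hprob 0] with ω hω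
      rw [Real.norm_eq_abs]
      exact abs_fHat_le β₁ β₂ hω.1 j
    · filter_upwards [hprob 0] with ω hω
      exact sum_fHat β₁ β₂ hω.1 hω.2
  have hB : ∀ i, ∀ᵐ ω ∂μ, Tendsto (fun K : ℕ =>
      (1 / K : ℝ) * ∑ k ∈ Finset.range K, V k ω i) atTop (nhds (1 / C : ℝ)) := by
    refine slln (fun j v => v j) (fun j => measurable_pi_apply j) (fun j => hint 0 j)
      (fun σ v j => rfl) ?_
    filter_upwards [hprob 0] with ω hω
    exact hω.1.2
  have hgood : ∀ᵐ ω ∂μ, ∀ k, IsProbVec (V k ω) ∧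
      ∀ i, i ≠ M k ω → V k ω i < V k ω (M k ω) := ae_all_iff.2 hprob
  have hA' : ∀ᵐ ω ∂μ, ∀ i, Tendsto (fun K : ℕ =>
      (1 / K : ℝ) * ∑ k ∈ Finset.range K, fHat β₁ β₂ (V k ω) i) atTop (nhds (1 / C : ℝ)) :=
    ae_all_iff.2 hA
  have hB' : ∀ᵐ ω ∂μ, ∀ i, Tendsto (fun K : ℕ =>
      (1 / K : ℝ) * ∑ k ∈ Finset.range K, V k ω i) atTop (nhds (1 / C : ℝ)) :=
    ae_all_iff.2 hB
  filter_upwards [hgood, hA', hB'] with ω hg hA2 hB2 i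
  refine ⟨?_, hB2 i⟩
  refine (hA2 i).congr fun K => ?_
  congr 1
  exact Finset.sum_congr rfl fun k _ => fHat_eq_errCorrect β₁ β₂ (hg k).2 i
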